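/- Let (X, Ω̃, μ̃) be the measure space extension of the inductive limit of a strictly inductive system of measure spaces ((X_λ, Ω_λ, μ_λ))_{λ∈Λ}, where μ̃(A) = sup_λ μ_λ(A ∩ X_λ). Then the subspace of L²(X, μ̃) consisting of (classes of) functions vanishing μ̃-a.e. outside some X_λ and square-integrable on that X_λ is dense in L²(X, μ̃). Equivalently, for any φ ∈ L²(X, μ̃), the functions φ·χ_{X_λ} converge to φ in L²-norm along the directed set Λ. -/

import Mathlib

open MeasureTheory Filter Topology
open scoped ENNReal NNReal

/-- Let `(X, Ω̃, μ̃)` be the measure space extension of the inductive limit of a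
strictly inductive system of measure spaces, so that `μ̃(A) = ⨆_λ μ̃(A ∩ X_λ)` for measurable
`A`, the `X_λ` increase along the directed set and cover `X`. Then for every
`φ ∈ L²(X, μ̃)`, the truncations `φ·χ_{X_λ}` converge to `φ` in `L²`-norm along `Λ`
(equivalently, the functions supported on some `X_λ` are dense in `L²(X, μ̃)`). -/
theorem truncations_tendsto_L2 {Λ E : Type*} [Preorder Λ] [Nonempty Λ] [MeasurableSpace E]
    (hdir : ∀ a b : Λ, ∃ c, a ≤ c ∧ b ≤ c)
    (X : Λ → Set E) (μt : Measure E)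
    (hX : ∀ l, MeasurableSet (X l))
    (hmonoX : ∀ {a b : Λ}, a ≤ b → X a ⊆ X b)
    (hcover : (⋃ l, X l) = Set.univ)
    (hsup : ∀ A : Set E, MeasurableSet A → μt A = ⨆ l, μt (A ∩ X l)) :
    ∀ φ : Lp ℂ 2 μt,
      Tendsto (fun l => eLpNorm (⇑φ - (X l).indicator ⇑φ) 2 μt) atTop (𝓝 0) := by
  have hΛ : IsDirected Λ (· ≤ ·) := ⟨hdir⟩
  -- key: lintegral is the sup of the truncated lintegrals
  have key : ∀ f : E → ℝ≥0∞, Measurable f →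
      ∫⁻ x, f x ∂μt = ⨆ l, ∫⁻ x in X l, f x ∂μt := by
    intro f hf
    refine le_antisymm ?_ (iSup_le fun l => lintegral_mono' Measure.restrict_le_self le_rfl)
    rw [lintegral_eq_iSup_eapprox_lintegral hf]
    refine iSup_le fun n => ?_
    set s : SimpleFunc E ℝ≥0∞ := SimpleFunc.eapprox f n with hs
    have hsle : ∀ a, s a ≤ f a := fun a => by
      rw [← SimpleFunc.iSup_eapprox_apply hf a]
      exact le_iSup (fun n => (SimpleFunc.eapprox f n) a) n
    have h1 : s.lintegral μt = ⨆ l, s.lintegral (μt.restrict (X l)) := by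
      simp only [SimpleFunc.lintegral]
      have : ∀ c ∈ s.range, c * μt (s ⁻¹' {c}) = ⨆ l, c * (μt.restrict (X l)) (s ⁻¹' {c}) := by
        intro c _
        rw [hsup (s ⁻¹' {c}) (s.measurableSet_preimage _), ENNReal.mul_iSup]
        congr 1; funext l
        rw [Measure.restrict_apply (s.measurableSet_preimage _)]
      rw [Finset.sum_congr rfl this]
      exact ENNReal.finsetSum_iSup_of_monotone fun c a b hab =>
        mul_le_mul_right (by
          rw [Measure.restrict_apply (s.measurableSet_preimage _),
            Measure.restrict_apply (s.measurableSet_preimage _)]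
          exact measure_mono (Set.inter_subset_inter_right _ (hmonoX hab))) _
    rw [h1]
    refine iSup_mono fun l => ?_
    rw [← SimpleFunc.lintegral_eq_lintegral]
    exact lintegral_mono hsle
  intro φ
  -- measurable representative
  obtain ⟨ψ, hψm, hψae⟩ := (Lp.aestronglyMeasurable φ)
  set g : E → ℝ≥0∞ := fun x => (‖ψ x‖₊ : ℝ≥0∞) ^ (2 : ℝ) with hg
  have hgm : Measurable g := hψm.measurable.nnnorm.coe_nnreal_ennreal.pow_const _
  have hgae : (fun x => (‖φ x‖₊ : ℝ≥0∞) ^ (2 : ℝ)) =ᵐ[μt] g :=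
    hψae.mono fun x hx => by simp [hg, hx]
  set T : ℝ≥0∞ := ∫⁻ x, g x ∂μt with hT
  have hTeq : eLpNorm (⇑φ) 2 μt = T ^ (1 / (2 : ℝ)) := by
    rw [eLpNorm_eq_lintegral_rpow_enorm_toReal (by norm_num) (by norm_num)]
    simp only [ENNReal.toReal_ofNat, enorm_eq_nnnorm]
    rw [lintegral_congr_ae hgae]
  have hTne : T ≠ ∞ := by
    have h := Lp.eLpNorm_lt_top φ
    rw [hTeq] at h
    intro hc
    rw [hc] at h
    simp [ENNReal.top_rpow_of_pos (by norm_num : (0:ℝ) < 1/2)] at h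
  set F : Λ → ℝ≥0∞ := fun l => ∫⁻ x in X l, g x ∂μt with hF
  have hFmono : Monotone F := fun a b hab =>
    lintegral_mono' (Measure.restrict_mono (hmonoX hab) le_rfl) le_rfl
  have hFsup : (⨆ l, F l) = T := (key g hgm).symm
  have hFtend : Tendsto F atTop (𝓝 T) := hFsup ▸ tendsto_atTop_iSup hFmono
  have hFne : ∀ l, F l ≠ ∞ := fun l =>
    ne_top_of_le_ne_top hTne (hFsup ▸ le_iSup F l)
  -- rewrite the eLpNorm of the truncation error
  have hnorm : ∀ l, eLpNorm (⇑φ - (X l).indicator ⇑φ) 2 μt = (T - F l) ^ (1 / (2 : ℝ)) := by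
    intro l
    rw [← Set.indicator_compl, eLpNorm_indicator_eq_eLpNorm_restrict (hX l).compl,
      eLpNorm_eq_lintegral_rpow_enorm_toReal (by norm_num) (by norm_num)]
    simp only [ENNReal.toReal_ofNat, enorm_eq_nnnorm]
    rw [lintegral_congr_ae (ae_restrict_of_ae hgae),
      setLIntegral_compl (hX l) (hFne l)]
  simp only [hnorm]
  have : Tendsto (fun l => T - F l) atTop (𝓝 (T - T)) :=
    ENNReal.Tendsto.sub tendsto_const_nhds hFtend (Or.inl hTne)
  rw [tsub_self] at this
  have h2 := this.ennrpow_const (1 / (2 : ℝ))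
  rwa [ENNReal.zero_rpow_of_pos (by norm_num)] at h2
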